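/- Let d ≥ 3, let a₁,…,a_d > 0, b₁,…,b_d > 0, s₁,…,s_d > 0 be real constants, and assume Σᵢ aᵢ > d/2 − 1. Then both of the following integrals are finite and they are equal: ∫_{(0,∞)^d} ( Σⱼ λⱼ/sⱼ )^{−(d/2−1)} · Πᵢ λᵢ^{aᵢ−1} e^{−bᵢλᵢ} dλ = ( Πᵢ Γ(aᵢ) / Γ(d/2 − 1) ) · ∫₀^∞ u^{d/2−2} · Πᵢ ( bᵢ + u/sᵢ )^{−aᵢ} du, where Γ is the real Gamma function. -/

import Mathlib

open MeasureTheory Real Set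
open scoped ENNReal

lemma lintegral_pi_prod {n : ℕ} (μ : Measure ℝ) [SigmaFinite μ]
    (F : Fin n → ℝ → ℝ≥0∞) (hF : ∀ i, Measurable (F i)) :
    ∫⁻ x : Fin n → ℝ, ∏ i, F i (x i) ∂(Measure.pi fun _ => μ)
      = ∏ i, ∫⁻ t, F i t ∂μ := by
  induction n with
  | zero => simp [lintegral_const, Measure.pi_univ]
  | succ n ih =>
      rw [← ((measurePreserving_piFinSuccAbove (fun _ : Fin (n+1) => μ) 0).symm).lintegral_comp_emb
        (MeasurableEquiv.measurableEmbedding _)]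
      simp_rw [MeasurableEquiv.piFinSuccAbove_symm_apply, Fin.insertNthEquiv,
        Fin.prod_univ_succ, Fin.insertNth_zero]
      simp only [Fin.zero_succAbove, cast_eq, Function.comp_def, Fin.cons_zero, Fin.cons_succ,
        Equiv.coe_fn_mk]
      have h2 : Measurable fun y : Fin n → ℝ => ∏ i, F (Fin.succ i) (y i) :=
        Finset.measurable_prod Finset.univ fun i _ => (hF i.succ).comp (measurable_pi_apply i)
      rw [lintegral_prod_mul (f := fun x => F 0 x)
        (g := fun y : Fin n → ℝ => ∏ i, F (Fin.succ i) (y i))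
        (hF 0).aemeasurable h2.aemeasurable,
        ih (fun i => F (Fin.succ i)) (fun i => hF (Fin.succ i))]

lemma pi_restrict_Ioi (d : ℕ) :
    Measure.pi (fun _ : Fin d => (volume : Measure ℝ).restrict (Set.Ioi 0)) =
      (volume : Measure (Fin d → ℝ)).restrict (Set.univ.pi fun _ => Set.Ioi 0) := by
  refine Measure.pi_eq fun t ht => ?_
  rw [Measure.restrict_apply (MeasurableSet.univ_pi ht), ← Set.pi_inter_distrib,
    volume_pi, Measure.pi_pi]
  exact Finset.prod_congr rfl fun i _ => (Measure.restrict_apply (ht i)).symm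

lemma gamma_key1 {p r : ℝ} (hp : 0 < p) (hr : 0 < r) :
    IntegrableOn (fun x : ℝ => x ^ (p-1) * Real.exp (-(r*x))) (Set.Ioi 0) := by
  have h := integrableOn_rpow_mul_exp_neg_mul_rpow (s := p - 1) (p := 1) (by linarith) one_pos hr
  refine h.congr_fun (fun x hx => ?_) measurableSet_Ioi
  simp only [Real.rpow_one]; ring_nf

lemma gamma_key2 {p r : ℝ} (hp : 0 < p) (hr : 0 < r) :
    ∫⁻ x in Set.Ioi (0:ℝ), ENNReal.ofReal (x ^ (p-1) * Real.exp (-(r*x)))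
      = ENNReal.ofReal (Real.Gamma p * r ^ (-p)) := by
  rw [← ofReal_integral_eq_lintegral_ofReal (gamma_key1 hp hr)
      (by filter_upwards [ae_restrict_mem measurableSet_Ioi] with x hx using
        mul_nonneg (Real.rpow_nonneg (le_of_lt hx) _) (Real.exp_pos _).le),
    Real.integral_rpow_mul_exp_neg_mul_Ioi hp hr]
  congr 1
  rw [one_div, Real.inv_rpow hr.le, ← Real.rpow_neg hr.le, mul_comm]

lemma g_integrable {d : ℕ} (a b s : Fin d → ℝ) (c : ℝ)
    (ha : ∀ i, 0 < a i) (hb : ∀ i, 0 < b i) (hs : ∀ i, 0 < s i)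
    (hcpos : 0 < c) (hA : c < ∑ i, a i) :
    IntegrableOn (fun u : ℝ => u ^ (c-1) * ∏ i, (b i + u / s i) ^ (-(a i))) (Set.Ioi 0) := by
  have hgmeas : Measurable (fun u : ℝ => u ^ (c-1) * ∏ i, (b i + u / s i) ^ (-(a i))) :=
    (measurable_id.pow measurable_const).mul
      (Finset.measurable_prod Finset.univ fun i _ =>
        ((measurable_const.add (measurable_id.div_const _)).pow measurable_const))
  have hg_nonneg : ∀ u : ℝ, 0 < u → 0 ≤ u ^ (c-1) * ∏ i, (b i + u / s i) ^ (-(a i)) := by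
    intro u hu
    exact mul_nonneg (Real.rpow_nonneg hu.le _)
      (Finset.prod_nonneg fun i _ => Real.rpow_nonneg
        (add_pos (hb i) (div_pos hu (hs i))).le _)
  have hg1 : IntegrableOn (fun u : ℝ => u ^ (c-1) * ∏ i, (b i + u / s i) ^ (-(a i)))
      (Set.Ioc 0 1) := by
    have hdom : IntegrableOn (fun u : ℝ => (∏ i, (b i) ^ (-(a i))) * u ^ (c-1)) (Set.Ioc 0 1) := by
      refine Integrable.const_mul ?_ _
      have h := intervalIntegral.intervalIntegrable_rpow' (a := 0) (b := 1) (r := c - 1)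
        (by linarith)
      rwa [intervalIntegrable_iff_integrableOn_Ioc_of_le (by norm_num : (0:ℝ) ≤ 1)] at h
    refine hdom.mono' hgmeas.aestronglyMeasurable.restrict ?_
    filter_upwards [ae_restrict_mem measurableSet_Ioc] with u hu
    rw [Real.norm_eq_abs, abs_of_nonneg (hg_nonneg u hu.1), mul_comm ((∏ i, (b i) ^ (-(a i))))]
    refine mul_le_mul_of_nonneg_left ?_ (Real.rpow_nonneg hu.1.le _)
    refine Finset.prod_le_prod (fun i _ => Real.rpow_nonneg (add_pos (hb i) (div_pos hu.1 (hs i))).le _) fun i _ => ?_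
    exact Real.rpow_le_rpow_of_nonpos (hb i)
      (le_add_of_nonneg_right (div_nonneg hu.1.le (hs i).le)) (neg_nonpos.mpr (ha i).le)
  have hg2 : IntegrableOn (fun u : ℝ => u ^ (c-1) * ∏ i, (b i + u / s i) ^ (-(a i)))
      (Set.Ioi 1) := by
    have hdom : IntegrableOn (fun u : ℝ => (∏ i, (s i) ^ (a i)) * u ^ (c - 1 - ∑ i, a i))
        (Set.Ioi 1) := by
      refine Integrable.const_mul ?_ _
      rw [← IntegrableOn]
      exact (integrableOn_Ioi_rpow_iff zero_lt_one).2 (by linarith)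
    refine hdom.mono' hgmeas.aestronglyMeasurable.restrict ?_
    filter_upwards [ae_restrict_mem measurableSet_Ioi] with u hu
    have hu0 : (0:ℝ) < u := lt_trans one_pos hu
    rw [Real.norm_eq_abs, abs_of_nonneg (hg_nonneg u hu0)]
    have step : ∏ i, (b i + u / s i) ^ (-(a i)) ≤ ∏ i, (s i ^ (a i) * u ^ (-(a i))) := by
      refine Finset.prod_le_prod (fun i _ => Real.rpow_nonneg (add_pos (hb i) (div_pos hu0 (hs i))).le _) fun i _ => ?_
      have h2 : (0:ℝ) < u / s i := div_pos hu0 (hs i)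
      calc (b i + u / s i) ^ (-(a i))
          ≤ (u / s i) ^ (-(a i)) :=
            Real.rpow_le_rpow_of_nonpos h2 (le_add_of_nonneg_left (hb i).le)
              (neg_nonpos.mpr (ha i).le)
        _ = u ^ (-(a i)) / (s i) ^ (-(a i)) := Real.div_rpow hu0.le (hs i).le _
        _ = s i ^ (a i) * u ^ (-(a i)) := by
            rw [Real.rpow_neg (hs i).le, div_eq_mul_inv, inv_inv, mul_comm]
    calc u ^ (c-1) * ∏ i, (b i + u / s i) ^ (-(a i))
        ≤ u ^ (c-1) * ∏ i, (s i ^ (a i) * u ^ (-(a i))) :=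
          mul_le_mul_of_nonneg_left step (Real.rpow_nonneg hu0.le _)
      _ = (∏ i, (s i) ^ (a i)) * u ^ (c - 1 - ∑ i, a i) := by
          rw [Finset.prod_mul_distrib, ← Real.rpow_sum_of_pos hu0,
            mul_left_comm, ← Real.rpow_add hu0]
          congr 2
          rw [Finset.sum_neg_distrib]
          ring
  have := hg1.union hg2
  rwa [Set.Ioc_union_Ioi_eq_Ioi (zero_le_one)] at this

theorem gamma_representation_interchange
    (d : ℕ) (hd : 3 ≤ d) (a b s : Fin d → ℝ)
    (ha : ∀ i, 0 < a i) (hb : ∀ i, 0 < b i) (hs : ∀ i, 0 < s i)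
    (hsum : (d : ℝ) / 2 - 1 < ∑ i, a i) :
    IntegrableOn
      (fun l : Fin d → ℝ =>
        (∑ j, l j / s j) ^ (-((d : ℝ) / 2 - 1))
          * ∏ i, (l i ^ (a i - 1) * Real.exp (-(b i * l i))))
      (Set.univ.pi fun _ : Fin d => Set.Ioi (0 : ℝ))
    ∧ IntegrableOn
      (fun u : ℝ => u ^ ((d : ℝ) / 2 - 2) * ∏ i, (b i + u / s i) ^ (-(a i)))
      (Set.Ioi (0 : ℝ))
    ∧ (∫ l in Set.univ.pi fun _ : Fin d => Set.Ioi (0 : ℝ),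
        (∑ j, l j / s j) ^ (-((d : ℝ) / 2 - 1))
          * ∏ i, (l i ^ (a i - 1) * Real.exp (-(b i * l i))))
      = ((∏ i, Real.Gamma (a i)) / Real.Gamma ((d : ℝ) / 2 - 1))
          * ∫ u in Set.Ioi (0 : ℝ),
              u ^ ((d : ℝ) / 2 - 2) * ∏ i, (b i + u / s i) ^ (-(a i)) := by
  classical
  haveI : Nonempty (Fin d) := ⟨⟨0, by omega⟩⟩
  have hd3 : (3:ℝ) ≤ (d:ℝ) := by exact_mod_cast hd
  set c : ℝ := (d:ℝ)/2 - 1 with hc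
  have hc2 : (d : ℝ)/2 - 2 = c - 1 := by rw [hc]; ring
  rw [hc2]
  have hcpos : 0 < c := by rw [hc]; linarith
  have hΓc : 0 < Real.Gamma c := Real.Gamma_pos_of_pos hcpos
  set S : Set (Fin d → ℝ) := Set.univ.pi fun _ : Fin d => Set.Ioi (0 : ℝ) with hSdef
  set ν : Measure (Fin d → ℝ) :=
    Measure.pi fun _ : Fin d => (volume : Measure ℝ).restrict (Set.Ioi 0) with hνdef
  have hνS : ν = (volume : Measure (Fin d → ℝ)).restrict S := pi_restrict_Ioi d
  set f : (Fin d → ℝ) → ℝ := fun l =>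
    (∑ j, l j / s j) ^ (-c) * ∏ i, (l i ^ (a i - 1) * Real.exp (-(b i * l i))) with hfdef
  set g : ℝ → ℝ := fun u => u ^ (c-1) * ∏ i, (b i + u / s i) ^ (-(a i)) with hgdef
  -- measurability
  have hTmeas : Measurable fun l : Fin d → ℝ => ∑ j, l j / s j :=
    Finset.measurable_sum _ fun j _ => (measurable_pi_apply j).div_const _
  have hPmeas : Measurable fun l : Fin d → ℝ =>
      ∏ i, (l i ^ (a i - 1) * Real.exp (-(b i * l i))) :=
    Finset.measurable_prod _ fun i _ => ((measurable_pi_apply i).pow measurable_const).mul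
      ((measurable_const.mul (measurable_pi_apply i)).neg.exp)
  have hfmeas : Measurable f := (hTmeas.pow measurable_const).mul hPmeas
  -- a.e. positivity on ν
  have hae : ∀ᵐ l ∂ν, ∀ i, 0 < l i := by
    rw [hνS]
    filter_upwards [ae_restrict_mem (MeasurableSet.univ_pi fun _ => measurableSet_Ioi)] with l hl
    exact fun i => hl i (Set.mem_univ i)
  -- g facts
  have hgae : 0 ≤ᵐ[(volume : Measure ℝ).restrict (Set.Ioi 0)] g := by
    filter_upwards [ae_restrict_mem measurableSet_Ioi] with u hu
    exact mul_nonneg (Real.rpow_nonneg hu.le _)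
      (Finset.prod_nonneg fun i _ => Real.rpow_nonneg
        (add_pos (hb i) (div_pos hu (hs i))).le _)
  have hgint : IntegrableOn g (Set.Ioi 0) := g_integrable a b s c ha hb hs hcpos hsum
  set Ig : ℝ := ∫ u in Set.Ioi (0:ℝ), g u with hIgdef
  have hIg0 : 0 ≤ Ig := integral_nonneg_of_ae hgae
  have hglint : ∫⁻ u in Set.Ioi (0:ℝ), ENNReal.ofReal (g u) = ENNReal.ofReal Ig :=
    (ofReal_integral_eq_lintegral_ofReal hgint hgae).symm
  -- the joint kernel
  set Φ : (Fin d → ℝ) → ℝ → ℝ≥0∞ := fun l u =>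
    ENNReal.ofReal (u ^ (c-1) * Real.exp (-((∑ j, l j / s j) * u))
      * (∏ i, (l i ^ (a i - 1) * Real.exp (-(b i * l i))))) with hΦdef
  have hΦmeas : Measurable (fun z : (Fin d → ℝ) × ℝ => Φ z.1 z.2) := by
    simp only [hΦdef]
    exact Measurable.ennreal_ofReal (((measurable_snd.pow measurable_const).mul
      (((hTmeas.comp measurable_fst).mul measurable_snd).neg.exp)).mul (hPmeas.comp measurable_fst))
  -- Step 1 : insert the Gamma representation
  have step1 : (∫⁻ l, ENNReal.ofReal (f l) ∂ν) * ENNReal.ofReal (Real.Gamma c)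
      = ∫⁻ l, (∫⁻ u in Set.Ioi (0:ℝ), Φ l u) ∂ν := by
    rw [← lintegral_mul_const _ hfmeas.ennreal_ofReal]
    refine lintegral_congr_ae ?_
    filter_upwards [hae] with l hl
    have hT : 0 < ∑ j, l j / s j :=
      Finset.sum_pos (fun j _ => div_pos (hl j) (hs j)) Finset.univ_nonempty
    calc ENNReal.ofReal (f l) * ENNReal.ofReal (Real.Gamma c)
        = ENNReal.ofReal (Real.Gamma c * (∑ j, l j / s j) ^ (-c))
            * ENNReal.ofReal (∏ i, (l i ^ (a i - 1) * Real.exp (-(b i * l i)))) := by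
          simp only [hfdef]
          rw [ENNReal.ofReal_mul (Real.rpow_nonneg hT.le _), ENNReal.ofReal_mul hΓc.le]
          ring
      _ = (∫⁻ u in Set.Ioi (0:ℝ),
              ENNReal.ofReal (u ^ (c-1) * Real.exp (-((∑ j, l j / s j) * u))))
            * ENNReal.ofReal (∏ i, (l i ^ (a i - 1) * Real.exp (-(b i * l i)))) := by
          rw [gamma_key2 hcpos hT]
      _ = ∫⁻ u in Set.Ioi (0:ℝ),
            ENNReal.ofReal (u ^ (c-1) * Real.exp (-((∑ j, l j / s j) * u)))
              * ENNReal.ofReal (∏ i, (l i ^ (a i - 1) * Real.exp (-(b i * l i)))) :=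
          (lintegral_mul_const' _ _ ENNReal.ofReal_ne_top).symm
      _ = ∫⁻ u in Set.Ioi (0:ℝ), Φ l u := by
          refine lintegral_congr_ae ?_
          filter_upwards [ae_restrict_mem measurableSet_Ioi] with u hu
          simp only [hΦdef]
          rw [← ENNReal.ofReal_mul
            (mul_nonneg (Real.rpow_nonneg hu.le _) (Real.exp_pos _).le)]
  -- Step 2 : Tonelli swap
  have step2 : ∫⁻ l, (∫⁻ u in Set.Ioi (0:ℝ), Φ l u) ∂ν
      = ∫⁻ u in Set.Ioi (0:ℝ), (∫⁻ l, Φ l u ∂ν) :=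
    lintegral_lintegral_swap hΦmeas.aemeasurable
  -- Step 3 : inner integral factorization
  have step3 : ∀ᵐ u ∂(volume : Measure ℝ).restrict (Set.Ioi 0),
      (∫⁻ l, Φ l u ∂ν)
        = ENNReal.ofReal (∏ i, Real.Gamma (a i)) * ENNReal.ofReal (g u) := by
    filter_upwards [ae_restrict_mem measurableSet_Ioi] with u hu
    have hbu : ∀ i, 0 < b i + u / s i := fun i => add_pos (hb i) (div_pos hu (hs i))
    have e1 : ∫⁻ l, Φ l u ∂ν
        = ∫⁻ l, ENNReal.ofReal (u ^ (c-1))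
            * ∏ i, ENNReal.ofReal ((l i) ^ (a i - 1)
                * Real.exp (-((b i + u / s i) * (l i)))) ∂ν := by
      refine lintegral_congr_ae ?_
      filter_upwards [hae] with l hl
      have h1 : Real.exp (-((∑ j, l j / s j) * u)) = ∏ j, Real.exp (-(u / s j * l j)) := by
        rw [← Real.exp_sum]
        congr 1
        rw [Finset.sum_mul, ← Finset.sum_neg_distrib]
        exact Finset.sum_congr rfl fun j _ => by ring
      have h2 : ∀ i : Fin d,
          Real.exp (-(u / s i * l i)) * ((l i) ^ (a i - 1) * Real.exp (-(b i * l i)))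
            = (l i) ^ (a i - 1) * Real.exp (-((b i + u / s i) * l i)) := by
        intro i
        rw [mul_left_comm, ← Real.exp_add,
          show -(u / s i * l i) + -(b i * l i) = -((b i + u / s i) * l i) from by ring]
      have expand : u ^ (c-1) * Real.exp (-((∑ j, l j / s j) * u))
            * (∏ i, (l i ^ (a i - 1) * Real.exp (-(b i * l i))))
          = u ^ (c-1) * ∏ i, ((l i) ^ (a i - 1) * Real.exp (-((b i + u / s i) * (l i)))) := by
        rw [mul_assoc, h1, ← Finset.prod_mul_distrib]
        congr 1
        exact Finset.prod_congr rfl fun i _ => h2 i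
      simp only [hΦdef]
      rw [expand, ENNReal.ofReal_mul (Real.rpow_nonneg hu.le _),
        ENNReal.ofReal_prod_of_nonneg (fun i _ =>
          mul_nonneg (Real.rpow_nonneg (hl i).le _) (Real.exp_pos _).le)]
    rw [e1, lintegral_const_mul' _ _ ENNReal.ofReal_ne_top, hνdef,
      lintegral_pi_prod ((volume : Measure ℝ).restrict (Set.Ioi 0))
        (fun i => fun t : ℝ => ENNReal.ofReal (t ^ (a i - 1)
          * Real.exp (-((b i + u / s i) * t))))
        (fun i => Measurable.ennreal_ofReal ((measurable_id.pow measurable_const).mul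
          ((measurable_const.mul measurable_id).neg.exp)))]
    have e2 : ∀ i : Fin d,
        (∫⁻ t in Set.Ioi (0:ℝ), ENNReal.ofReal (t ^ (a i - 1)
          * Real.exp (-((b i + u / s i) * t))))
          = ENNReal.ofReal (Real.Gamma (a i) * (b i + u / s i) ^ (-(a i))) :=
      fun i => gamma_key2 (ha i) (hbu i)
    rw [Finset.prod_congr rfl fun i _ => e2 i,
      ← ENNReal.ofReal_prod_of_nonneg (fun i _ =>
        mul_nonneg (Real.Gamma_pos_of_pos (ha i)).le (Real.rpow_nonneg (hbu i).le _)),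
      Finset.prod_mul_distrib,
      ENNReal.ofReal_mul (Finset.prod_nonneg fun i _ => (Real.Gamma_pos_of_pos (ha i)).le)]
    simp only [hgdef]
    rw [ENNReal.ofReal_mul (Real.rpow_nonneg hu.le _)]
    ring
  -- combine
  have main : (∫⁻ l, ENNReal.ofReal (f l) ∂ν) * ENNReal.ofReal (Real.Gamma c)
      = ENNReal.ofReal ((∏ i, Real.Gamma (a i)) / Real.Gamma c * Ig)
          * ENNReal.ofReal (Real.Gamma c) := by
    rw [step1, step2, lintegral_congr_ae step3,
      lintegral_const_mul' _ _ ENNReal.ofReal_ne_top, hglint,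
      ← ENNReal.ofReal_mul (Finset.prod_nonneg fun i _ => (Real.Gamma_pos_of_pos (ha i)).le),
      ← ENNReal.ofReal_mul (mul_nonneg (div_nonneg
        (Finset.prod_nonneg fun i _ => (Real.Gamma_pos_of_pos (ha i)).le) hΓc.le) hIg0)]
    congr 1
    field_simp
  have h0 : ENNReal.ofReal (Real.Gamma c) ≠ 0 := by
    simp only [ne_eq, ENNReal.ofReal_eq_zero, not_le]
    exact hΓc
  have hJ : (∫⁻ l, ENNReal.ofReal (f l) ∂ν)
      = ENNReal.ofReal ((∏ i, Real.Gamma (a i)) / Real.Gamma c * Ig) := by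
    have h1 : (∫⁻ l, ENNReal.ofReal (f l) ∂ν)
        = (ENNReal.ofReal ((∏ i, Real.Gamma (a i)) / Real.Gamma c * Ig)
            * ENNReal.ofReal (Real.Gamma c)) / ENNReal.ofReal (Real.Gamma c) :=
      (ENNReal.eq_div_iff h0 ENNReal.ofReal_ne_top).2 (by rw [mul_comm]; exact main)
    have h2 : ENNReal.ofReal ((∏ i, Real.Gamma (a i)) / Real.Gamma c * Ig)
        = (ENNReal.ofReal ((∏ i, Real.Gamma (a i)) / Real.Gamma c * Ig)
            * ENNReal.ofReal (Real.Gamma c)) / ENNReal.ofReal (Real.Gamma c) :=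
      (ENNReal.eq_div_iff h0 ENNReal.ofReal_ne_top).2 (mul_comm _ _)
    rw [h1, ← h2]
  -- nonnegativity of f a.e.
  have hfae : 0 ≤ᵐ[(volume : Measure (Fin d → ℝ)).restrict S] f := by
    rw [← hνS]
    filter_upwards [hae] with l hl
    have hT : 0 < ∑ j, l j / s j :=
      Finset.sum_pos (fun j _ => div_pos (hl j) (hs j)) Finset.univ_nonempty
    exact mul_nonneg (Real.rpow_nonneg hT.le _)
      (Finset.prod_nonneg fun i _ =>
        mul_nonneg (Real.rpow_nonneg (hl i).le _) (Real.exp_pos _).le)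
  have hfint : IntegrableOn f S := by
    refine ⟨hfmeas.aestronglyMeasurable.restrict, ?_⟩
    rw [hasFiniteIntegral_iff_ofReal hfae, ← hνS, hJ]
    exact ENNReal.ofReal_lt_top
  refine ⟨hfint, hgint, ?_⟩
  rw [MeasureTheory.integral_eq_lintegral_of_nonneg_ae hfae hfmeas.aestronglyMeasurable.restrict,
    ← hνS, hJ, ENNReal.toReal_ofReal (mul_nonneg (div_nonneg
      (Finset.prod_nonneg fun i _ => (Real.Gamma_pos_of_pos (ha i)).le) hΓc.le) hIg0)]
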